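/- Assume in addition the weak inf-sup condition: there exist constants C₀, C₁, C₂ > 0 such that for every z ∈ W there exists r₀ ∈ V with ‖r₀‖_V ≤ C₂·N(z) and b(z, r₀) ≥ C₀·N(z)² − C₁·q_c(z)^{1/2}·N(z). Then there exist constants β > 0 and C > 0, depending only on C₀, C₁, C₂, such that for every (p,z) ∈ V × W there exists (r,v) ∈ V × W with |(r,v)|_X ≤ C·|(p,z)|_X and B((p,z),(r,v)) ≥ β·|(p,z)|_X². In particular B satisfies the inf-sup condition inf_{(p,z)} sup_{(r,v)} B((p,z),(r,v)) / (|(p,z)|_X · |(r,v)|_X) ≥ β/C over pairs with nonzero seminorm. -/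

import Mathlib

set_option maxHeartbeats 4000000


/-- inf-sup condition from the weak inf-sup condition, abstract
HDG structure.  Let `V` be a real inner product space and `W` a real vector
space with a seminorm `N`.  Given bilinear forms `a`, `b`, `c` and sign-flip
operators `SV`, `SW` satisfying the abstract HDG axioms, and assuming the weak
inf-sup condition with constants `C₀, C₁, C₂ > 0`, there exist `β > 0` and
`C > 0` such that for every `(p, z)` there is `(r, v)` with
`|(r,v)|_X ≤ C |(p,z)|_X` and `B((p,z),(r,v)) ≥ β |(p,z)|_X²`; in particular
`B` satisfies the inf-sup condition with constant `β / C` over pairs with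
nonzero seminorm. -/
theorem hdg_inf_sup_of_weak_inf_sup
    (V W : Type*) [NormedAddCommGroup V] [InnerProductSpace ℝ V]
    [AddCommGroup W] [Module ℝ W] (N : Seminorm ℝ W)
    (a : V →ₗ[ℝ] V →ₗ[ℝ] ℝ) (b : W →ₗ[ℝ] V →ₗ[ℝ] ℝ) (c : W →ₗ[ℝ] W →ₗ[ℝ] ℝ)
    (SV : V →ₗ[ℝ] V) (SW : W →ₗ[ℝ] W)
    (ha1 : ∀ p : V, a p (SV p) = ‖p‖ ^ 2)
    (ha2 : ∀ r : V, ‖SV r‖ ≤ ‖r‖)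
    (ha3 : ∀ p r : V, |a p r| ≤ ‖p‖ * ‖r‖)
    (hc0 : ∀ z : W, 0 ≤ c z (SW z))
    (hc1 : ∀ z : W, c (SW z) (SW (SW z)) ≤ c z (SW z))
    (hcN : ∀ z : W, N (SW z) ≤ N z)
    (hb : ∀ (z : W) (r : V), b z (SV r) = b (SW z) r)
    -- the weak inf-sup condition with constants C₀, C₁, C₂ > 0
    (C₀ C₁ C₂ : ℝ) (hC₀ : 0 < C₀) (hC₁ : 0 < C₁) (hC₂ : 0 < C₂)
    (hweak : ∀ z : W, ∃ r₀ : V, ‖r₀‖ ≤ C₂ * N z ∧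
      C₀ * (N z) ^ 2 - C₁ * Real.sqrt (c z (SW z)) * N z ≤ b z r₀) :
    ∃ β > (0 : ℝ), ∃ C > (0 : ℝ),
      (∀ (p : V) (z : W), ∃ (r : V) (v : W),
        Real.sqrt (‖r‖ ^ 2 + (N v) ^ 2 + c v (SW v))
          ≤ C * Real.sqrt (‖p‖ ^ 2 + (N z) ^ 2 + c z (SW z)) ∧
        β * (‖p‖ ^ 2 + (N z) ^ 2 + c z (SW z))
          ≤ a p r + b z r + b v p - c z v) ∧
      (∀ (p : V) (z : W),
        0 < Real.sqrt (‖p‖ ^ 2 + (N z) ^ 2 + c z (SW z)) →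
        ∃ (r : V) (v : W),
          0 < Real.sqrt (‖r‖ ^ 2 + (N v) ^ 2 + c v (SW v)) ∧
          (β / C) * (Real.sqrt (‖p‖ ^ 2 + (N z) ^ 2 + c z (SW z))
              * Real.sqrt (‖r‖ ^ 2 + (N v) ^ 2 + c v (SW v)))
            ≤ a p r + b z r + b v p - c z v) := by

  -- choice of constants
  obtain ⟨δ, hδdef⟩ : ∃ x : ℝ, x = C₀ / (2*(C₁^2+C₂^2)) := ⟨_, rfl⟩
  have hδ : 0 < δ := by rw [hδdef]; positivity
  have hδeq : δ * (2*(C₁^2+C₂^2)) = C₀ := by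
    rw [hδdef]; exact div_mul_cancel₀ C₀ (by positivity)
  have hδ1 : 2*δ*C₁^2 ≤ C₀ := by nlinarith only [hδeq, mul_nonneg hδ.le (sq_nonneg C₂)]
  have hδ2 : 2*δ*C₂^2 ≤ C₀ := by nlinarith only [hδeq, mul_nonneg hδ.le (sq_nonneg C₁)]
  obtain ⟨β, hβdef⟩ : ∃ x : ℝ, x = min (1/2 : ℝ) (δ*C₀/2) := ⟨_, rfl⟩
  have hβ : 0 < β := by rw [hβdef]; exact lt_min (by norm_num) (by positivity)
  have hβ1 : β ≤ 1/2 := by rw [hβdef]; exact min_le_left _ _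
  have hβ2 : β ≤ δ*C₀/2 := by rw [hβdef]; exact min_le_right _ _
  obtain ⟨C, hCdef⟩ : ∃ x : ℝ, x = Real.sqrt (2 + 2*δ^2*C₂^2) := ⟨_, rfl⟩
  have hKpos : (0:ℝ) < 2 + 2*δ^2*C₂^2 := by positivity
  have hC : 0 < C := by rw [hCdef]; exact Real.sqrt_pos.mpr hKpos
  have hC2 : C^2 = 2 + 2*δ^2*C₂^2 := by rw [hCdef]; exact Real.sq_sqrt hKpos.le
  -- the purely numerical inequality
  have hnum : ∀ P n s : ℝ, 0 ≤ P → 0 ≤ n → 0 ≤ s →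
      β*(P^2+n^2+s^2) ≤ P^2 + s^2 + δ*(C₀*n^2 - C₁*s*n - P*(C₂*n)) := by
    intro P n s hP hn hs
    have h1 : δ*(C₁*s*n) ≤ δ*C₀/4*n^2 + 1/2*s^2 := by
      nlinarith only [sq_nonneg (δ*C₁*n - s),
        mul_le_mul_of_nonneg_right hδ1 (mul_nonneg hδ.le (sq_nonneg n))]
    have h2 : δ*(C₂*P*n) ≤ δ*C₀/4*n^2 + 1/2*P^2 := by
      nlinarith only [sq_nonneg (δ*C₂*n - P),
        mul_le_mul_of_nonneg_right hδ2 (mul_nonneg hδ.le (sq_nonneg n))]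
    nlinarith only [mul_le_mul_of_nonneg_right hβ1 (sq_nonneg P),
      mul_le_mul_of_nonneg_right hβ1 (sq_nonneg s),
      mul_le_mul_of_nonneg_right hβ2 (sq_nonneg n), h1, h2]
  -- the key construction
  have key : ∀ (p : V) (z : W), ∃ r : V,
      ‖r‖^2 ≤ 2*‖p‖^2 + 2*δ^2*C₂^2*(N z)^2 ∧
      ‖p‖ ≤ ‖r‖ + δ*(C₂*N z) ∧
      β * (‖p‖^2 + (N z)^2 + c z (SW z)) ≤
        a p r + b z r + b (-(SW z)) p - c z (-(SW z)) := by
    intro p z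
    obtain ⟨r₀, hr₀, hbr₀⟩ := hweak z
    have hn : 0 ≤ N z := apply_nonneg N z
    have hq : 0 ≤ c z (SW z) := hc0 z
    have hP1 : ‖p‖^2 ≤ ‖p‖ * ‖SV p‖ := by
      calc ‖p‖^2 = a p (SV p) := (ha1 p).symm
        _ ≤ |a p (SV p)| := le_abs_self _
        _ ≤ ‖p‖*‖SV p‖ := ha3 p (SV p)
    have hSVp : ‖SV p‖ = ‖p‖ := by
      refine le_antisymm (ha2 p) ?_
      nlinarith only [hP1, norm_nonneg p, norm_nonneg (SV p), ha2 p]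
    have hr₀' : δ*‖r₀‖ ≤ δ*(C₂*N z) := mul_le_mul_of_nonneg_left hr₀ hδ.le
    refine ⟨SV p + δ • r₀, ?_, ?_, ?_⟩
    · have hnr : ‖SV p + δ • r₀‖ ≤ ‖p‖ + δ*(C₂*N z) := by
        calc ‖SV p + δ • r₀‖ ≤ ‖SV p‖ + ‖δ • r₀‖ := norm_add_le _ _
          _ = ‖p‖ + δ*‖r₀‖ := by
              rw [hSVp, norm_smul, Real.norm_eq_abs, abs_of_pos hδ]
          _ ≤ ‖p‖ + δ*(C₂*N z) := by linarith
      nlinarith only [sq_nonneg (‖p‖ - δ*(C₂*N z)), norm_nonneg (SV p + δ • r₀), hnr,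
        norm_nonneg p, mul_nonneg hδ.le (mul_nonneg hC₂.le hn)]
    · have hrw : ‖p‖ = ‖(SV p + δ • r₀) - δ • r₀‖ := by
        rw [add_sub_cancel_right, hSVp]
      rw [hrw]
      calc ‖(SV p + δ • r₀) - δ • r₀‖ ≤ ‖SV p + δ • r₀‖ + ‖δ • r₀‖ := norm_sub_le _ _
        _ = ‖SV p + δ • r₀‖ + δ*‖r₀‖ := by
            rw [norm_smul, Real.norm_eq_abs, abs_of_pos hδ]
        _ ≤ ‖SV p + δ • r₀‖ + δ*(C₂*N z) := by linarith
    · obtain ⟨s, hsdef⟩ : ∃ x : ℝ, x = Real.sqrt (c z (SW z)) := ⟨_, rfl⟩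
      have hs : 0 ≤ s := hsdef ▸ Real.sqrt_nonneg _
      have hs2 : s^2 = c z (SW z) := hsdef ▸ Real.sq_sqrt hq
      rw [← hsdef] at hbr₀
      have hBval : a p (SV p + δ • r₀) + b z (SV p + δ • r₀)
            + b (-(SW z)) p - c z (-(SW z))
          = ‖p‖^2 + c z (SW z) + δ*(a p r₀ + b z r₀) := by
        have e1 := ha1 p
        have e2 := hb z p
        simp only [map_add, map_smul, map_neg, smul_eq_mul, LinearMap.neg_apply,
          LinearMap.add_apply, LinearMap.smul_apply]
        rw [e1, e2]; ring
      rw [hBval, ← hs2]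
      have har : -(‖p‖*(C₂*N z)) ≤ a p r₀ := by
        have h := ha3 p r₀
        have hmul : ‖p‖*‖r₀‖ ≤ ‖p‖*(C₂*N z) := mul_le_mul_of_nonneg_left hr₀ (norm_nonneg p)
        have hna := neg_abs_le (a p r₀)
        linarith
      have hinner : C₀*(N z)^2 - C₁*s*(N z) - ‖p‖*(C₂*N z) ≤ a p r₀ + b z r₀ := by
        linarith only [hbr₀, har]
      have hδmono : δ*(C₀*(N z)^2 - C₁*s*(N z) - ‖p‖*(C₂*N z)) ≤ δ*(a p r₀ + b z r₀) :=
        mul_le_mul_of_nonneg_left hinner hδ.le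
      have hmain := hnum ‖p‖ (N z) s (norm_nonneg p) hn hs
      linarith only [hmain, hδmono]
  -- the seminorm bound for the witness
  have sbound : ∀ (p : V) (z : W) (r : V),
      ‖r‖^2 ≤ 2*‖p‖^2 + 2*δ^2*C₂^2*(N z)^2 →
      Real.sqrt (‖r‖^2 + (N (-(SW z)))^2 + c (-(SW z)) (SW (-(SW z))))
        ≤ C * Real.sqrt (‖p‖^2 + (N z)^2 + c z (SW z)) := by
    intro p z r hr1
    have hq := hc0 z
    have hq2 := hc0 (SW z)
    have hcc : c (-(SW z)) (SW (-(SW z))) = c (SW z) (SW (SW z)) := by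
      simp
    have hN2 : (N (-(SW z)))^2 ≤ (N z)^2 := by
      rw [map_neg_eq_map]
      exact pow_le_pow_left₀ (apply_nonneg N _) (hcN z) 2
    have hsum : ‖r‖^2 + (N (-(SW z)))^2 + c (-(SW z)) (SW (-(SW z)))
        ≤ (2 + 2*δ^2*C₂^2) * (‖p‖^2 + (N z)^2 + c z (SW z)) := by
      rw [hcc]
      have h1 := hc1 z
      nlinarith only [h1, hr1, hN2, sq_nonneg ‖p‖, sq_nonneg (N z), hq, hq2,
        mul_nonneg (by positivity : (0:ℝ) ≤ 2*δ^2*C₂^2) hq,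
        mul_nonneg (by positivity : (0:ℝ) ≤ 2*δ^2*C₂^2) (sq_nonneg ‖p‖)]
    calc Real.sqrt (‖r‖^2 + (N (-(SW z)))^2 + c (-(SW z)) (SW (-(SW z))))
        ≤ Real.sqrt ((2 + 2*δ^2*C₂^2) * (‖p‖^2 + (N z)^2 + c z (SW z))) :=
          Real.sqrt_le_sqrt hsum
      _ = C * Real.sqrt (‖p‖^2 + (N z)^2 + c z (SW z)) := by
          rw [Real.sqrt_mul hKpos.le, ← hCdef]
  refine ⟨β, hβ, C, hC, ?_, ?_⟩
  · -- first bullet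
    intro p z
    obtain ⟨r, hr1, _, hr3⟩ := key p z
    exact ⟨r, -(SW z), sbound p z r hr1, hr3⟩
  · -- second bullet
    intro p z hX
    obtain ⟨r, hr1, hr2, hr3⟩ := key p z
    have hq := hc0 z
    have hS0 : 0 ≤ ‖p‖^2 + (N z)^2 + c z (SW z) := by
      linarith only [sq_nonneg ‖p‖, sq_nonneg (N z), hq]
    have hSpos : 0 < ‖p‖^2 + (N z)^2 + c z (SW z) := Real.sqrt_pos.mp hX
    by_cases hY : 0 < Real.sqrt (‖r‖^2 + (N (-(SW z)))^2 + c (-(SW z)) (SW (-(SW z))))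
    · refine ⟨r, -(SW z), hY, ?_⟩
      have hYC := sbound p z r hr1
      have hXn := Real.sqrt_nonneg (‖p‖^2 + (N z)^2 + c z (SW z))
      have hXX : Real.sqrt (‖p‖^2 + (N z)^2 + c z (SW z))
          * Real.sqrt (‖p‖^2 + (N z)^2 + c z (SW z)) = ‖p‖^2 + (N z)^2 + c z (SW z) :=
        Real.mul_self_sqrt hS0
      have h1 : Real.sqrt (‖p‖^2 + (N z)^2 + c z (SW z))
            * Real.sqrt (‖r‖^2 + (N (-(SW z)))^2 + c (-(SW z)) (SW (-(SW z))))
          ≤ Real.sqrt (‖p‖^2 + (N z)^2 + c z (SW z))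
            * (C * Real.sqrt (‖p‖^2 + (N z)^2 + c z (SW z))) :=
        mul_le_mul_of_nonneg_left hYC hXn
      have h2 := mul_le_mul_of_nonneg_left h1 (le_of_lt (div_pos hβ hC))
      have h3 : β / C * (Real.sqrt (‖p‖^2 + (N z)^2 + c z (SW z))
            * (C * Real.sqrt (‖p‖^2 + (N z)^2 + c z (SW z))))
          = β * (Real.sqrt (‖p‖^2 + (N z)^2 + c z (SW z))
            * Real.sqrt (‖p‖^2 + (N z)^2 + c z (SW z))) := by
        field_simp
      rw [hXX] at h3
      linarith only [hr3, h2, h3]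
    · -- degenerate case: the witness has zero seminorm
      have hYnn := Real.sqrt_nonneg (‖r‖^2 + (N (-(SW z)))^2 + c (-(SW z)) (SW (-(SW z))))
      have hsum0 : ‖r‖^2 + (N (-(SW z)))^2 + c (-(SW z)) (SW (-(SW z))) ≤ 0 := by
        by_contra h
        push_neg at h
        exact hY (Real.sqrt_pos.mpr h)
      have hcc : c (-(SW z)) (SW (-(SW z))) = c (SW z) (SW (SW z)) := by simp
      have hq2 := hc0 (SW z)
      rw [hcc, map_neg_eq_map] at hsum0
      have hr0 : r = 0 := by
        have h1 : ‖r‖^2 ≤ 0 := by linarith only [hsum0, sq_nonneg (N (SW z)), hq2]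
        have h2 : ‖r‖^2 = 0 := le_antisymm h1 (sq_nonneg _)
        exact norm_eq_zero.mp (sq_eq_zero_iff.mp h2)
      have hN0 : N (SW z) = 0 := by
        have h1 : (N (SW z))^2 ≤ 0 := by linarith only [hsum0, sq_nonneg ‖r‖, hq2]
        exact sq_eq_zero_iff.mp (le_antisymm h1 (sq_nonneg _))
      have hq20 : c (SW z) (SW (SW z)) = 0 := by
        have h1 : c (SW z) (SW (SW z)) ≤ 0 := by
          linarith only [hsum0, sq_nonneg ‖r‖, sq_nonneg (N (SW z))]
        linarith only [h1, hq2]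
      rw [hr0] at hr2 hr3
      simp only [norm_zero, zero_add] at hr2
      have hlin : ∀ u : ℝ, 0 ≤ u^2 * c z (SW z)
          - u * (c z (SW (SW z)) + c (SW z) (SW z)) := by
        intro u
        have h := hc0 (u • z - SW z)
        simp only [map_sub, map_smul, LinearMap.sub_apply, LinearMap.smul_apply,
          smul_eq_mul] at h
        linarith only [h, hq20]
      have hL : c z (SW (SW z)) + c (SW z) (SW z) = 0 := by
        obtain ⟨Lv, hLdef⟩ : ∃ x : ℝ, x = c z (SW (SW z)) + c (SW z) (SW z) := ⟨_, rfl⟩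
        rw [← hLdef]
        have hd : (0:ℝ) < c z (SW z) + 1 := by linarith
        have h2 := hlin (Lv / (c z (SW z) + 1))
        rw [← hLdef] at h2
        have hid : ((c z (SW z) + 1))^2 * ((Lv/(c z (SW z) + 1))^2 * c z (SW z)
              - (Lv/(c z (SW z) + 1)) * Lv)
            = Lv^2 * c z (SW z) - (c z (SW z) + 1)*Lv^2 := by
          field_simp
        have h3 : 0 ≤ Lv^2 * c z (SW z) - (c z (SW z) + 1)*Lv^2 := by
          rw [← hid]
          exact mul_nonneg (sq_nonneg _) h2
        have h4 : Lv^2 ≤ 0 := by nlinarith only [h3, hq, sq_nonneg Lv]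
        have h5 : Lv^2 = 0 := le_antisymm h4 (sq_nonneg Lv)
        exact sq_eq_zero_iff.mp h5
      obtain ⟨t, htdef⟩ : ∃ x : ℝ, x = if 0 ≤ b z p - c z z then C else -C := ⟨_, rfl⟩
      have htE : 0 ≤ t * (b z p - c z z) := by
        rw [htdef]; split_ifs with hE
        · exact mul_nonneg hC.le hE
        · push_neg at hE
          have hrw : -C * (b z p - c z z) = C * (-(b z p - c z z)) := by ring
          rw [hrw]
          exact mul_nonneg hC.le (by linarith)
      have ht2 : t^2 = C^2 := by
        rw [htdef]; split_ifs <;> ring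
      have htn : ‖t‖ = C := by
        rw [htdef]; split_ifs
        · rw [Real.norm_eq_abs, abs_of_pos hC]
        · rw [Real.norm_eq_abs, abs_neg, abs_of_pos hC]
      obtain ⟨v', hv'def⟩ : ∃ x : W, x = t • z - SW z := ⟨_, rfl⟩
      have hNv : N v' = C * N z := by
        have h1 : N v' ≤ N (t • z) + N (SW z) := by
          rw [hv'def]; exact map_sub_le_add N _ _
        have h2 : N (t • z) ≤ N v' + N (SW z) := by
          have he : (t • z : W) = v' + SW z := by rw [hv'def]; abel
          rw [he]
          exact map_add_le_add N _ _
        have hsm : N (t • z) = C * N z := by rw [map_smul_eq_mul, htn]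
        have hn0 := apply_nonneg N v'
        rw [hN0] at h1 h2
        rw [hsm] at h1 h2
        linarith
      have hqv : c v' (SW v') = C^2 * c z (SW z) := by
        have hexp : c v' (SW v') = t^2 * c z (SW z)
            - t * (c z (SW (SW z)) + c (SW z) (SW z)) + c (SW z) (SW (SW z)) := by
          rw [hv'def]
          simp only [map_sub, map_smul, LinearMap.sub_apply, LinearMap.smul_apply,
            smul_eq_mul]
          ring
        rw [hexp, hL, hq20, ht2]; ring
      have hn2q : 0 < (N z)^2 + c z (SW z) := by
        by_contra h
        push_neg at h
        have hn0 : N z = 0 := by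
          have h1 : (N z)^2 ≤ 0 := by linarith only [h, hq]
          exact sq_eq_zero_iff.mp (le_antisymm h1 (sq_nonneg _))
        have hp0 : ‖p‖ = 0 := by
          rw [hn0] at hr2
          have hple : ‖p‖ ≤ 0 := by
            calc ‖p‖ ≤ δ*(C₂*0) := hr2
              _ = 0 := by ring
          linarith only [hple, norm_nonneg p]
        rw [hn0, hp0] at hSpos
        linarith only [hSpos, h, sq_nonneg (N z), hn0]
      have hsumv : ‖(0:V)‖^2 + (N v')^2 + c v' (SW v')
          = C^2 * ((N z)^2 + c z (SW z)) := by
        rw [norm_zero, hNv, hqv]; ring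
      refine ⟨0, v', ?_, ?_⟩
      · rw [hsumv]
        exact Real.sqrt_pos.mpr (mul_pos (pow_pos hC 2) hn2q)
      · have hB' : a p 0 + b z 0 + b v' p - c z v'
            = (a p 0 + b z 0 + b (-(SW z)) p - c z (-(SW z))) + t * (b z p - c z z) := by
          rw [hv'def]
          simp only [map_zero, map_sub, map_smul, map_neg, LinearMap.sub_apply,
            LinearMap.smul_apply, LinearMap.neg_apply, smul_eq_mul]
          ring
        have hBfinal : β * (‖p‖^2 + (N z)^2 + c z (SW z))
            ≤ a p 0 + b z 0 + b v' p - c z v' := by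
          rw [hB']
          linarith only [hr3, htE]
        rw [hsumv, Real.sqrt_mul (sq_nonneg C), Real.sqrt_sq hC.le]
        have hYle : Real.sqrt ((N z)^2 + c z (SW z))
            ≤ Real.sqrt (‖p‖^2 + (N z)^2 + c z (SW z)) :=
          Real.sqrt_le_sqrt (by linarith only [sq_nonneg ‖p‖])
        have hXn := Real.sqrt_nonneg (‖p‖^2 + (N z)^2 + c z (SW z))
        have hXX : Real.sqrt (‖p‖^2 + (N z)^2 + c z (SW z))
            * Real.sqrt (‖p‖^2 + (N z)^2 + c z (SW z)) = ‖p‖^2 + (N z)^2 + c z (SW z) :=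
          Real.mul_self_sqrt hS0
        have h1 : Real.sqrt (‖p‖^2 + (N z)^2 + c z (SW z))
              * (C * Real.sqrt ((N z)^2 + c z (SW z)))
            ≤ Real.sqrt (‖p‖^2 + (N z)^2 + c z (SW z))
              * (C * Real.sqrt (‖p‖^2 + (N z)^2 + c z (SW z))) := by
          apply mul_le_mul_of_nonneg_left _ hXn
          exact mul_le_mul_of_nonneg_left hYle hC.le
        have h2 := mul_le_mul_of_nonneg_left h1 (le_of_lt (div_pos hβ hC))
        have h3 : β / C * (Real.sqrt (‖p‖^2 + (N z)^2 + c z (SW z))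
              * (C * Real.sqrt (‖p‖^2 + (N z)^2 + c z (SW z))))
            = β * (Real.sqrt (‖p‖^2 + (N z)^2 + c z (SW z))
              * Real.sqrt (‖p‖^2 + (N z)^2 + c z (SW z))) := by
          field_simp
        rw [hXX] at h3
        linarith only [hBfinal, h2, h3]
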